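/- Let β, γ be real numbers with 0 < |β| < 1 and let S be the shift operator (Sf)(t) = f(t+1) on l¹(ℤ, ℂ). For ν ∈ ℝ and T ∈ ℕ let g_{ν,T}(t) = e^{2πiνt}/√(2T+1) for −T ≤ t ≤ T and 0 otherwise, and set z_ν := e^{2πiν} and f_{ν,T} := γ S (I − βS)^{−1} g_{ν,T}. Then ‖f_{ν,T} − γ z_ν (1 − β z_ν)^{−1} g_{ν,T}‖₁ ≤ (2/√(2T+1)) · (|γ|/|β|) · (1 − |β|)^{−2}. -/

import Mathlib

/-- The normalized complex wave `g_{ν,T}` of frequency `ν` on the window `[-T, T]`: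
`g_{ν,T} t = e^{2πiνt} / √(2T+1)` for `-T ≤ t ≤ T` and `0` otherwise. -/
noncomputable def waveWindow (ν : ℝ) (T : ℕ) : ℤ → ℂ :=
  fun t => if -(T : ℤ) ≤ t ∧ t ≤ (T : ℤ)
    then Complex.exp (2 * Real.pi * Complex.I * (ν : ℂ) * (t : ℂ)) / (Real.sqrt (2 * T + 1) : ℂ)
    else 0

/-- The von Neumann inverse `(I - βS)⁻¹ = ∑_{j ≥ 0} (βS)^j` applied to a complex
sequence `g`, where `S` is the shift `(S g) t = g (t + 1)`. -/
noncomputable def vonNeumannInvC (β : ℝ) (g : ℤ → ℂ) : ℤ → ℂ :=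
  fun t => ∑' j : ℕ, (β : ℂ) ^ j * g (t + j)

private lemma norm_exp_wave (ν : ℝ) (t : ℤ) :
    ‖Complex.exp (2 * Real.pi * Complex.I * (ν : ℂ) * (t : ℂ))‖ = 1 := by
  have h : (2 * Real.pi * Complex.I * (ν : ℂ) * (t : ℂ))
      = ((2 * Real.pi * ν * t : ℝ) : ℂ) * Complex.I := by push_cast; ring
  rw [h, Complex.norm_exp_ofReal_mul_I]

private lemma norm_wave_le (ν : ℝ) (T : ℕ) (t : ℤ) :
    ‖waveWindow ν T t‖ ≤ (Real.sqrt (2 * T + 1))⁻¹ := by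
  have hsq : 0 < Real.sqrt (2 * T + 1) := Real.sqrt_pos.mpr (by positivity)
  unfold waveWindow
  split_ifs with h
  · rw [norm_div, norm_exp_wave]
    rw [Complex.norm_real, Real.norm_eq_abs, abs_of_nonneg hsq.le, one_div]
  · simp [inv_nonneg.mpr hsq.le]

private lemma wave_zero (ν : ℝ) (T : ℕ) (t : ℤ) (h : ¬(-(T : ℤ) ≤ t ∧ t ≤ (T : ℤ))) :
    waveWindow ν T t = 0 := by
  unfold waveWindow; rw [if_neg h]

private lemma wave_shift (ν : ℝ) (T : ℕ) (t : ℤ) (j : ℕ)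
    (h2 : -(T : ℤ) ≤ t ∧ t ≤ (T : ℤ))
    (h1 : -(T : ℤ) ≤ t + 1 + j ∧ t + 1 + (j : ℤ) ≤ (T : ℤ)) :
    waveWindow ν T (t + 1 + j)
      = Complex.exp (2 * Real.pi * Complex.I * (ν : ℂ)) ^ (j + 1) * waveWindow ν T t := by
  unfold waveWindow
  rw [if_pos h1, if_pos h2, ← Complex.exp_nat_mul]
  rw [mul_div_assoc', ← Complex.exp_add]
  congr 2
  push_cast
  ring

theorem stmt_14 (β γ : ℝ) (hβ0 : 0 < |β|) (hβ1 : |β| < 1) (ν : ℝ) (T : ℕ) :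
    ∑' t : ℤ, ‖(γ : ℂ) * vonNeumannInvC β (waveWindow ν T) (t + 1)
        - (γ : ℂ) * Complex.exp (2 * Real.pi * Complex.I * (ν : ℂ))
            * (1 - (β : ℂ) * Complex.exp (2 * Real.pi * Complex.I * (ν : ℂ)))⁻¹
            * waveWindow ν T t‖
      ≤ 2 / Real.sqrt (2 * T + 1) * (|γ| / |β|) * ((1 - |β|) ^ 2)⁻¹ := by
  classical
  set z : ℂ := Complex.exp (2 * Real.pi * Complex.I * (ν : ℂ)) with hz
  set g : ℤ → ℂ := waveWindow ν T with hgdef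
  set r : ℝ := |β| with hrdef
  have hr0 : 0 < r := hβ0
  have hr1 : r < 1 := hβ1
  have h1r : (0:ℝ) < 1 - r := by linarith
  set sq : ℝ := Real.sqrt (2 * T + 1) with hsq
  have hsqpos : 0 < sq := Real.sqrt_pos.mpr (by positivity)
  set a : ℝ := sq⁻¹ with hadef
  have ha0 : 0 < a := inv_pos.mpr hsqpos
  have hznorm : ‖z‖ = 1 := by
    have := norm_exp_wave ν 1
    simpa using this
  have hbz1 : ‖(β : ℂ) * z‖ < 1 := by
    rw [norm_mul, hznorm, mul_one, Complex.norm_real, Real.norm_eq_abs]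
    exact hβ1
  have hgnorm : ∀ t : ℤ, ‖g t‖ ≤ a := fun t => norm_wave_le ν T t
  -- the summands F j t
  set F : ℕ → ℤ → ℂ := fun j t => (β : ℂ) ^ j * (g (t + 1 + j) - z ^ (j + 1) * g t) with hF
  have hFnorm : ∀ (j : ℕ) (t : ℤ), ‖F j t‖ ≤ r ^ j * a := by
    intro j t
    have hb : ‖(β : ℂ) ^ j‖ = r ^ j := by
      rw [norm_pow, Complex.norm_real, Real.norm_eq_abs]
    by_cases h1 : -(T : ℤ) ≤ t + 1 + j ∧ t + 1 + (j : ℤ) ≤ (T : ℤ)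
      <;> by_cases h2 : -(T : ℤ) ≤ t ∧ t ≤ (T : ℤ)
    · have := wave_shift ν T t j h2 h1
      rw [hF]
      simp only [← hgdef, ← hz] at this ⊢
      rw [this, sub_self, mul_zero, norm_zero]
      positivity
    · have hg0 : g t = 0 := wave_zero ν T t h2
      rw [hF]; simp only
      rw [hg0, mul_zero, sub_zero, norm_mul, hb]
      exact mul_le_mul_of_nonneg_left (hgnorm _) (by positivity)
    · have hg0 : g (t + 1 + j) = 0 := wave_zero ν T _ h1
      rw [hF]; simp only
      rw [hg0, zero_sub, norm_mul, hb, norm_neg, norm_mul, norm_pow, hznorm,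
        one_pow, one_mul]
      exact mul_le_mul_of_nonneg_left (hgnorm _) (by positivity)
    · have hg0 : g (t + 1 + j) = 0 := wave_zero ν T _ h1
      have hg0' : g t = 0 := wave_zero ν T t h2
      rw [hF]; simp only
      rw [hg0, hg0', mul_zero, sub_zero, mul_zero, norm_zero]
      positivity
  -- support of F j
  set s : ℕ → Finset ℤ :=
    fun j => Finset.Icc ((T : ℤ) - j) (T : ℤ) ∪ Finset.Icc (-(T : ℤ) - 1 - j) (-(T : ℤ) - 1)
    with hs
  have hFsupp : ∀ (j : ℕ) (t : ℤ), t ∉ s j → F j t = 0 := by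
    intro j t ht
    by_cases h1 : -(T : ℤ) ≤ t + 1 + j ∧ t + 1 + (j : ℤ) ≤ (T : ℤ)
      <;> by_cases h2 : -(T : ℤ) ≤ t ∧ t ≤ (T : ℤ)
    · have := wave_shift ν T t j h2 h1
      rw [hF]
      simp only [← hgdef, ← hz] at this ⊢
      rw [this, sub_self, mul_zero]
    · exfalso; apply ht
      simp only [hs, Finset.mem_union, Finset.mem_Icc]
      omega
    · exfalso; apply ht
      simp only [hs, Finset.mem_union, Finset.mem_Icc]
      omega
    · have hg0 : g (t + 1 + j) = 0 := wave_zero ν T _ h1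
      have hg0' : g t = 0 := wave_zero ν T t h2
      rw [hF]; simp only
      rw [hg0, hg0', mul_zero, sub_zero, mul_zero]
  have hcard : ∀ j : ℕ, ((s j).card : ℝ) ≤ 2 * ((j : ℝ) + 1) := by
    intro j
    have h1 : (s j).card ≤ 2 * (j + 1) := by
      refine (Finset.card_union_le _ _).trans ?_
      rw [Int.card_Icc, Int.card_Icc]
      omega
    calc ((s j).card : ℝ) ≤ ((2 * (j + 1) : ℕ) : ℝ) := by exact_mod_cast h1
      _ = 2 * ((j : ℝ) + 1) := by push_cast; ring
  have hrowSummable : ∀ j : ℕ, Summable fun t : ℤ => ‖F j t‖ := by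
    intro j
    exact summable_of_ne_finset_zero (s := s j)
      (fun t ht => by rw [hFsupp j t ht, norm_zero])
  have hrow : ∀ j : ℕ, (∑' t : ℤ, ‖F j t‖) ≤ 2 * ((j : ℝ) + 1) * (r ^ j * a) := by
    intro j
    rw [tsum_eq_sum (s := s j) (fun t ht => by rw [hFsupp j t ht, norm_zero])]
    calc ∑ t ∈ s j, ‖F j t‖ ≤ (s j).card • (r ^ j * a) :=
          Finset.sum_le_card_nsmul _ _ _ (fun t _ => hFnorm j t)
      _ = ((s j).card : ℝ) * (r ^ j * a) := nsmul_eq_mul _ _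
      _ ≤ 2 * ((j : ℝ) + 1) * (r ^ j * a) :=
          mul_le_mul_of_nonneg_right (hcard j) (by positivity)
  -- the majorant sequence
  have hrnorm : ‖r‖ < 1 := by rwa [Real.norm_eq_abs, abs_of_nonneg hr0.le]
  have hgeoR : Summable fun j : ℕ => r ^ j := summable_geometric_of_lt_one hr0.le hr1
  have hjr : Summable fun j : ℕ => (j : ℝ) * r ^ j := by
    have := summable_pow_mul_geometric_of_norm_lt_one 1 hrnorm (R := ℝ)
    simpa using this
  have hCsum : Summable fun j : ℕ => 2 * ((j : ℝ) + 1) * (r ^ j * a) := by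
    have : (fun j : ℕ => 2 * ((j : ℝ) + 1) * (r ^ j * a))
        = fun j : ℕ => (2 * a) * ((j : ℝ) * r ^ j + r ^ j) := by
      funext j; ring
    rw [this]
    exact (hjr.add hgeoR).mul_left _
  have hCval : (∑' j : ℕ, 2 * ((j : ℝ) + 1) * (r ^ j * a)) = 2 * a * ((1 - r) ^ 2)⁻¹ := by
    have h1 : (∑' j : ℕ, ((j : ℝ) * r ^ j + r ^ j))
        = r / (1 - r) ^ 2 + (1 - r)⁻¹ := by
      rw [Summable.tsum_add hjr hgeoR, tsum_coe_mul_geometric_of_norm_lt_one hrnorm,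
        tsum_geometric_of_lt_one hr0.le hr1]
    have heq : (fun j : ℕ => 2 * ((j : ℝ) + 1) * (r ^ j * a))
        = fun j : ℕ => (2 * a) * ((j : ℝ) * r ^ j + r ^ j) := by
      funext j; ring
    rw [heq, tsum_mul_left, h1]
    field_simp
    ring
  -- pointwise identity
  have hptwise : ∀ t : ℤ,
      (γ : ℂ) * vonNeumannInvC β g (t + 1) - (γ : ℂ) * z * (1 - (β : ℂ) * z)⁻¹ * g t
        = (γ : ℂ) * ∑' j : ℕ, F j t := by
    intro t
    have hsum1 : Summable fun j : ℕ => (β : ℂ) ^ j * g (t + 1 + j) := by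
      apply Summable.of_norm_bounded (hgeoR.mul_right a)
      intro j
      rw [norm_mul, norm_pow, Complex.norm_real, Real.norm_eq_abs]
      exact mul_le_mul_of_nonneg_left (hgnorm _) (by positivity)
    have hsum2 : Summable fun j : ℕ => ((β : ℂ) * z) ^ j :=
      summable_geometric_of_norm_lt_one hbz1
    have hgeo : (∑' j : ℕ, ((β : ℂ) * z) ^ j) = (1 - (β : ℂ) * z)⁻¹ :=
      tsum_geometric_of_norm_lt_one hbz1
    have hfun : (fun j : ℕ => (β : ℂ) ^ j * (z ^ (j + 1) * g t))
        = fun j : ℕ => ((β : ℂ) * z) ^ j * (z * g t) := by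
      funext j
      rw [mul_pow, pow_succ]
      ring
    have hsum2' : Summable fun j : ℕ => (β : ℂ) ^ j * (z ^ (j + 1) * g t) := by
      rw [hfun]; exact hsum2.mul_right _
    have h2 : (∑' j : ℕ, (β : ℂ) ^ j * (z ^ (j + 1) * g t))
        = (1 - (β : ℂ) * z)⁻¹ * (z * g t) := by
      rw [hfun, tsum_mul_right, hgeo]
    have key : (∑' j : ℕ, F j t)
        = (∑' j : ℕ, (β : ℂ) ^ j * g (t + 1 + j))
          - ∑' j : ℕ, (β : ℂ) ^ j * (z ^ (j + 1) * g t) := by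
      rw [← Summable.tsum_sub hsum1 hsum2']
      apply tsum_congr
      intro j
      rw [hF]; ring
    have hvn : vonNeumannInvC β g (t + 1) = ∑' j : ℕ, (β : ℂ) ^ j * g (t + 1 + j) := rfl
    rw [hvn, key, mul_sub, h2]
    ring
  -- summability of the double family
  have hFtSummable : ∀ t : ℤ, Summable fun j : ℕ => ‖F j t‖ := by
    intro t
    exact Summable.of_nonneg_of_le (fun j => norm_nonneg _) (fun j => hFnorm j t)
      (hgeoR.mul_right a)
  have hColSummable : Summable fun j : ℕ => ∑' t : ℤ, ‖F j t‖ :=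
    Summable.of_nonneg_of_le (fun j => tsum_nonneg fun t => norm_nonneg _) hrow hCsum
  have hUncurry : Summable (Function.uncurry fun (j : ℕ) (t : ℤ) => ‖F j t‖) := by
    apply (summable_prod_of_nonneg (fun p => norm_nonneg _)).mpr
    exact ⟨hrowSummable, hColSummable⟩
  have hswap : Summable fun t : ℤ => ∑' j : ℕ, ‖F j t‖ := by
    have := hUncurry.prod_symm.prod
    exact this
  -- main chain
  have hptnorm : ∀ t : ℤ,
      ‖(γ : ℂ) * vonNeumannInvC β g (t + 1) - (γ : ℂ) * z * (1 - (β : ℂ) * z)⁻¹ * g t‖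
        ≤ |γ| * ∑' j : ℕ, ‖F j t‖ := by
    intro t
    rw [hptwise t, norm_mul, Complex.norm_real, Real.norm_eq_abs]
    exact mul_le_mul_of_nonneg_left (norm_tsum_le_tsum_norm (hFtSummable t)) (abs_nonneg γ)
  have hLHSsummable : Summable fun t : ℤ =>
      ‖(γ : ℂ) * vonNeumannInvC β g (t + 1) - (γ : ℂ) * z * (1 - (β : ℂ) * z)⁻¹ * g t‖ :=
    Summable.of_nonneg_of_le (fun t => norm_nonneg _) hptnorm (hswap.mul_left _)
  calc
    ∑' t : ℤ, ‖(γ : ℂ) * vonNeumannInvC β g (t + 1)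
        - (γ : ℂ) * z * (1 - (β : ℂ) * z)⁻¹ * g t‖
      ≤ ∑' t : ℤ, |γ| * ∑' j : ℕ, ‖F j t‖ :=
        Summable.tsum_le_tsum hptnorm hLHSsummable (hswap.mul_left _)
    _ = |γ| * ∑' t : ℤ, ∑' j : ℕ, ‖F j t‖ := tsum_mul_left
    _ = |γ| * ∑' j : ℕ, ∑' t : ℤ, ‖F j t‖ := by rw [Summable.tsum_comm hUncurry]
    _ ≤ |γ| * ∑' j : ℕ, 2 * ((j : ℝ) + 1) * (r ^ j * a) :=
        mul_le_mul_of_nonneg_left (Summable.tsum_le_tsum hrow hColSummable hCsum) (abs_nonneg γ)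
    _ = |γ| * (2 * a * ((1 - r) ^ 2)⁻¹) := by rw [hCval]
    _ ≤ 2 / sq * (|γ| / r) * ((1 - r) ^ 2)⁻¹ := by
        rw [div_eq_mul_inv (2:ℝ) sq, ← hadef]
        have h1 : |γ| ≤ |γ| / r := by
          rw [le_div_iff₀ hr0]
          exact mul_le_of_le_one_right (abs_nonneg γ) hr1.le
        have h2 : (0:ℝ) ≤ ((1 - r) ^ 2)⁻¹ := by positivity
        calc |γ| * (2 * a * ((1 - r) ^ 2)⁻¹)
            = 2 * a * |γ| * ((1 - r) ^ 2)⁻¹ := by ring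
          _ ≤ 2 * a * (|γ| / r) * ((1 - r) ^ 2)⁻¹ := by
              apply mul_le_mul_of_nonneg_right _ h2
              apply mul_le_mul_of_nonneg_left h1 (by positivity)
          _ = 2 * a * (|γ| / r) * ((1 - r) ^ 2)⁻¹ := rfl
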